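/- Let f : ℝ^n → ℝ^n be C¹ with nilpotent differential Df(y) at every y (i.e. (Df(y))^n = 0), and let g : ℝ^n → ℝ be C¹ and positive. Define u(t,x) and ρ(t,x) implicitly by u = f(x − u t) and ρ(t,x) = g(x − u(t,x)t), assuming 1 + t Df(x − ut) is invertible so that u is well-defined and C¹. Then (u, ρ) solves the barotropic system u_t + (u·∇)u = 0, ρ_t + ∇·(ρu) = 0. -/

import Mathlib

open Matrix
set_option maxHeartbeats 1000000

/-- Jacobian matrix of a map `ℝ^n → ℝ^n`. -/
noncomputable def Dmat {n : ℕ} (f : (Fin n → ℝ) → (Fin n → ℝ)) (y : Fin n → ℝ) :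
    Matrix (Fin n) (Fin n) ℝ :=
  Matrix.of fun i j => fderiv ℝ f y (Pi.single j 1) i

lemma Dmat_mulVec {n : ℕ} (f : (Fin n → ℝ) → (Fin n → ℝ))
    (y v : Fin n → ℝ) : Dmat f y *ᵥ v = fderiv ℝ f y v := by
  have hv : v = ∑ j, v j • (Pi.single j 1 : Fin n → ℝ) := by
    conv_lhs => rw [← Finset.univ_sum_single v]
    refine Finset.sum_congr rfl fun j _ => ?_
    rw [← Pi.single_smul, smul_eq_mul, mul_one]
  conv_rhs => rw [hv]
  rw [map_sum]
  funext i
  simp only [Matrix.mulVec, dotProduct, Dmat, Matrix.of_apply, Finset.sum_apply,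
    _root_.map_smul, Pi.smul_apply, smul_eq_mul]
  exact Finset.sum_congr rfl fun j _ => mul_comm _ _

lemma dir_sum {n : ℕ} (v : Fin n → ℝ) :
    ((1:ℝ), (0 : Fin n → ℝ)) + ∑ j, v j • (((0:ℝ), Pi.single j 1) : ℝ × (Fin n → ℝ))
      = ((1:ℝ), v) := by
  have h1 : (∑ j, v j • (((0:ℝ), Pi.single j 1) : ℝ × (Fin n → ℝ))).1 = 0 := by
    rw [Prod.fst_sum]; simp
  have h2 : (∑ j, v j • (((0:ℝ), Pi.single j 1) : ℝ × (Fin n → ℝ))).2 = v := by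
    rw [Prod.snd_sum]
    simp only [Prod.smul_snd]
    conv_rhs => rw [← Finset.univ_sum_single v]
    refine Finset.sum_congr rfl fun j _ => ?_
    rw [← Pi.single_smul, smul_eq_mul, mul_one]
  have : (∑ j, v j • (((0:ℝ), Pi.single j 1) : ℝ × (Fin n → ℝ)))
      = ((0:ℝ), v) := Prod.ext h1 h2
  rw [this]
  ext <;> simp

/-- If `Df` is everywhere nilpotent and `g > 0`, then `u = f(x − ut)`,
`ρ = g(x − ut)` solve the barotropic system `u_t + (u·∇)u = 0`, `ρ_t + ∇·(ρu) = 0`. -/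
theorem barotropic_nilpotent_solution {n : ℕ}
    (f : (Fin n → ℝ) → (Fin n → ℝ)) (hf : ContDiff ℝ 1 f)
    (g : (Fin n → ℝ) → ℝ) (hg : ContDiff ℝ 1 g) (hgpos : ∀ y, 0 < g y)
    (hnil : ∀ y, Dmat f y ^ n = 0)
    (u : ℝ × (Fin n → ℝ) → (Fin n → ℝ)) (hu : ContDiff ℝ 1 u)
    (himp : ∀ z : ℝ × (Fin n → ℝ), u z = f (z.2 - z.1 • u z))
    (hinv : ∀ z : ℝ × (Fin n → ℝ),
      IsUnit ((1 : Matrix (Fin n) (Fin n) ℝ) + z.1 • Dmat f (z.2 - z.1 • u z))) :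
    (∀ (z : ℝ × (Fin n → ℝ)) (i : Fin n),
      fderiv ℝ u z (1, 0) i + ∑ j, u z j * fderiv ℝ u z (0, Pi.single j 1) i = 0) ∧
    (∀ z : ℝ × (Fin n → ℝ),
      fderiv ℝ (fun w : ℝ × (Fin n → ℝ) => g (w.2 - w.1 • u w)) z (1, 0)
        + ∑ i, fderiv ℝ (fun w : ℝ × (Fin n → ℝ) => g (w.2 - w.1 • u w) * u w i) z
            ((0 : ℝ), Pi.single i 1) = 0) := by
  classical
  have hud : Differentiable ℝ u := hu.differentiable one_ne_zero
  have hfd : Differentiable ℝ f := hf.differentiable one_ne_zero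
  have hgd : Differentiable ℝ g := hg.differentiable one_ne_zero
  set φ : ℝ × (Fin n → ℝ) → (Fin n → ℝ) := fun w => w.2 - w.1 • u w with hφdef
  have hφd : Differentiable ℝ φ := differentiable_snd.sub (differentiable_fst.smul hud)
  -- derivative of φ
  have hφhas : ∀ z : ℝ × (Fin n → ℝ), HasFDerivAt φ
      ((ContinuousLinearMap.snd ℝ ℝ (Fin n → ℝ)) -
        (z.1 • fderiv ℝ u z +
          (ContinuousLinearMap.fst ℝ ℝ (Fin n → ℝ)).smulRight (u z))) z := by
    intro z
    exact (hasFDerivAt_snd).sub ((hasFDerivAt_fst).smul (hud z).hasFDerivAt)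
  have hφD : ∀ (z d : ℝ × (Fin n → ℝ)),
      fderiv ℝ φ z d = d.2 - (z.1 • fderiv ℝ u z d + d.1 • u z) := by
    intro z d
    rw [(hφhas z).fderiv]
    simp [ContinuousLinearMap.smulRight_apply]
  -- chain rule
  have hD : ∀ (z d : ℝ × (Fin n → ℝ)),
      fderiv ℝ u z d = fderiv ℝ f (φ z) (fderiv ℝ φ z d) := by
    intro z d
    have hueq : u = f ∘ φ := funext himp
    rw [show fderiv ℝ u z = fderiv ℝ (f ∘ φ) z from by rw [← hueq],
      fderiv_comp (x := z) (hfd (φ z)) (hφd z)]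
    rfl
  -- the key direction derivative vanishes
  have hw0 : ∀ z : ℝ × (Fin n → ℝ), fderiv ℝ u z (1, u z) = 0 := by
    intro z
    have h1 := hD z (1, u z)
    rw [hφD z (1, u z)] at h1
    have harg : ((1:ℝ), u z).2 - (z.1 • fderiv ℝ u z (1, u z) + ((1:ℝ), u z).1 • u z)
        = -(z.1 • fderiv ℝ u z (1, u z)) := by
      simp only [one_smul]; abel
    rw [harg] at h1
    set w := fderiv ℝ u z (1, u z) with hw
    have h2 : w = -(z.1 • (Dmat f (φ z) *ᵥ w)) := by
      rw [Dmat_mulVec f (φ z) w, ← _root_.map_smul, ← map_neg]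
      exact h1
    have h3 : ((1 : Matrix (Fin n) (Fin n) ℝ) + z.1 • Dmat f (φ z)) *ᵥ w = 0 := by
      rw [Matrix.add_mulVec, Matrix.one_mulVec, Matrix.smul_mulVec]
      nth_rewrite 1 [h2]
      abel
    have hinj : Function.Injective
        (((1 : Matrix (Fin n) (Fin n) ℝ) + z.1 • Dmat f (φ z)).mulVec) :=
      Matrix.mulVec_injective_iff_isUnit.mpr (hinv z)
    have h4 : ((1 : Matrix (Fin n) (Fin n) ℝ) + z.1 • Dmat f (φ z)) *ᵥ w
        = ((1 : Matrix (Fin n) (Fin n) ℝ) + z.1 • Dmat f (φ z)) *ᵥ 0 := by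
      rw [h3, Matrix.mulVec_zero]
    exact hinj h4
  -- divergence-free: trace of spatial Jacobian of u vanishes
  have hMtr : ∀ z : ℝ × (Fin n → ℝ),
      ∑ i, fderiv ℝ u z ((0:ℝ), Pi.single i 1) i = 0 := by
    intro z
    set A := Dmat f (φ z) with hAdef
    set col : Fin n → (Fin n → ℝ) :=
      fun j => fderiv ℝ u z ((0:ℝ), Pi.single j 1) with hcoldef
    set M : Matrix (Fin n) (Fin n) ℝ := Matrix.of fun i j => col j i with hMdef
    have hcoleq : ∀ j, col j + z.1 • (A *ᵥ col j) = A *ᵥ (Pi.single j 1) := by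
      intro j
      have h1 : col j = fderiv ℝ f (φ z)
          ((Pi.single j 1 : Fin n → ℝ) - (z.1 • col j + (0:ℝ) • u z)) := by
        rw [hcoldef]; exact (hD z ((0:ℝ), Pi.single j 1)).trans
          (by rw [hφD z ((0:ℝ), Pi.single j 1)])
      have h2 : col j = A *ᵥ (Pi.single j 1) - z.1 • (A *ᵥ col j) := by
        rw [Dmat_mulVec f (φ z), Dmat_mulVec f (φ z), ← _root_.map_smul, ← map_sub]
        conv_lhs => rw [h1]
        congr 1
        rw [zero_smul, add_zero]
      nth_rewrite 1 [h2]
      abel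
    have hmat : ((1 : Matrix (Fin n) (Fin n) ℝ) + z.1 • A) * M = A := by
      ext i j
      have h := congrFun (hcoleq j) i
      have h2 : (A *ᵥ col j) i = (A * M) i j := by
        simp [Matrix.mulVec, Matrix.mul_apply, dotProduct, hMdef]
      have h3 : (A *ᵥ (Pi.single j 1 : Fin n → ℝ)) i = A i j := by
        simp [Matrix.mulVec_single]
      rw [Matrix.add_mul, Matrix.one_mul, Matrix.smul_mul, Matrix.add_apply,
        Matrix.smul_apply, smul_eq_mul, ← h2, ← h3]
      simpa [hMdef] using h
    obtain ⟨v, hv⟩ := hinv z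
    have hveq : (↑v : Matrix (Fin n) (Fin n) ℝ) = 1 + z.1 • A := hv
    have hMeq : M = (↑v⁻¹ : Matrix (Fin n) (Fin n) ℝ) * A := by
      calc M = ((↑v⁻¹ : Matrix (Fin n) (Fin n) ℝ) * ↑v) * M := by
              rw [Units.inv_mul, one_mul]
        _ = (↑v⁻¹ : Matrix (Fin n) (Fin n) ℝ) * (↑v * M) := by rw [mul_assoc]
        _ = (↑v⁻¹ : Matrix (Fin n) (Fin n) ℝ) * A := by rw [hveq, hmat]
    have hcommA : Commute ((↑v : Matrix (Fin n) (Fin n) ℝ)) A := by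
      rw [hveq]
      exact (Commute.one_left A).add_left ((Commute.refl A).smul_left z.1)
    have hcomm : Commute ((↑v⁻¹ : Matrix (Fin n) (Fin n) ℝ)) A :=
      hcommA.units_inv_left
    have hnilM : IsNilpotent M := by
      refine ⟨n, ?_⟩
      rw [hMeq, hcomm.mul_pow, hnil (φ z), mul_zero]
    have htr := (Matrix.isNilpotent_trace_of_isNilpotent hnilM).eq_zero
    simpa [Matrix.trace, Matrix.diag, hMdef, hcoldef] using htr
  constructor
  · intro z i
    have hcalc : fderiv ℝ u z (1, u z) = fderiv ℝ u z ((1:ℝ), (0 : Fin n → ℝ))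
        + ∑ j, u z j • fderiv ℝ u z ((0:ℝ), Pi.single j 1) := by
      conv_lhs => rw [← dir_sum (u z)]
      rw [map_add, map_sum]
      congr 1
      exact Finset.sum_congr rfl fun j _ => _root_.map_smul _ _ _
    have h := congrFun (hw0 z) i
    rw [hcalc] at h
    simpa [Finset.sum_apply] using h
  · intro z
    set L := (fderiv ℝ g (φ z)).comp (fderiv ℝ φ z) with hLdef
    have hgφhas : HasFDerivAt (fun w : ℝ × (Fin n → ℝ) => g (w.2 - w.1 • u w)) L z :=
      ((hgd (φ z)).hasFDerivAt.comp z (hφd z).hasFDerivAt)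
    have hprod : ∀ i : Fin n,
        fderiv ℝ (fun w : ℝ × (Fin n → ℝ) => g (w.2 - w.1 • u w) * u w i) z
          = g (φ z) • ((ContinuousLinearMap.proj i).comp (fderiv ℝ u z)) + u z i • L := by
      intro i
      have hdI0 : HasFDerivAt
          (⇑(ContinuousLinearMap.proj (R := ℝ) (φ := fun _ : Fin n => ℝ) i) ∘ u)
          ((ContinuousLinearMap.proj i).comp (fderiv ℝ u z)) z :=
        (ContinuousLinearMap.proj i).hasFDerivAt.comp z (hud z).hasFDerivAt
      have hdI : HasFDerivAt (fun w : ℝ × (Fin n → ℝ) => u w i)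
          ((ContinuousLinearMap.proj i).comp (fderiv ℝ u z)) z := hdI0
      exact (hgφhas.mul hdI).fderiv
    rw [hgφhas.fderiv]
    have hφ0 : fderiv ℝ φ z (1, u z) = 0 := by
      rw [hφD z (1, u z), hw0 z]
      simp
    have hL0 : L (1, u z) = 0 := by
      rw [hLdef, ContinuousLinearMap.comp_apply, hφ0, map_zero]
    have hsum : ∑ i, fderiv ℝ (fun w : ℝ × (Fin n → ℝ) => g (w.2 - w.1 • u w) * u w i) z
        ((0:ℝ), Pi.single i 1)
        = g (φ z) * (∑ i, fderiv ℝ u z ((0:ℝ), Pi.single i 1) i)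
          + ∑ i, u z i * L ((0:ℝ), Pi.single i 1) := by
      rw [Finset.mul_sum, ← Finset.sum_add_distrib]
      refine Finset.sum_congr rfl fun i _ => ?_
      rw [hprod i]
      simp [smul_eq_mul]
    rw [hsum, hMtr z, mul_zero, zero_add]
    have hLlin : L ((1:ℝ), (0 : Fin n → ℝ)) + ∑ i, u z i * L ((0:ℝ), Pi.single i 1)
        = L (1, u z) := by
      rw [← dir_sum (u z), map_add, map_sum]
      congr 1
      refine Finset.sum_congr rfl fun i _ => ?_
      rw [_root_.map_smul, smul_eq_mul]
    rw [hLlin, hL0]
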